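/- arXiv:1305.0546 — 3 statements merged into one kernel-verified Lean document; each statement's English description precedes it below -/
import Mathlib

section
/- Let A be a real M×N matrix, τ, σ > 0 with τσ‖AᵀA‖_op < 1. Define the block matrix M acting on pairs u = (x, y) ∈ ℝᴺ × ℝᴹ by uᵀMu = (1/τ)‖x‖² − 2 yᵀAx + (1/σ)‖y‖². Then M is positive definite; more precisely, with C = √(τσ‖AᵀA‖_op), one has (1 − C)·((1/σ)‖y‖² + (1/τ)‖x‖²) ≤ uᵀMu ≤ (1 + C)·((1/σ)‖y‖² + (1/τ)‖x‖²) for all x ∈ ℝᴺ, y ∈ ℝᴹ. -/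
set_option maxHeartbeats 1000000 in
/-- If `τσ‖AᵀA‖_op < 1` then the PDHG matrix
`M = [[τ⁻¹I, −Aᵀ],[−A, σ⁻¹I]]` (as a quadratic form
`uᵀMu = (1/τ)‖x‖² − 2yᵀAx + (1/σ)‖y‖²`) is positive definite, with
`(1 − C)((1/σ)‖y‖² + (1/τ)‖x‖²) ≤ uᵀMu ≤ (1 + C)((1/σ)‖y‖² + (1/τ)‖x‖²)`
where `C = √(τσ‖AᵀA‖_op)`. -/
theorem stmt_0 {N M : ℕ}
    (A : EuclideanSpace ℝ (Fin N) →L[ℝ] EuclideanSpace ℝ (Fin M))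
    (τ σ : ℝ) (hτ : 0 < τ) (hσ : 0 < σ)
    (hstab : τ * σ * ‖(ContinuousLinearMap.adjoint A).comp A‖ < 1) :
    let C := Real.sqrt (τ * σ * ‖(ContinuousLinearMap.adjoint A).comp A‖)
    ∀ (x : EuclideanSpace ℝ (Fin N)) (y : EuclideanSpace ℝ (Fin M)),
      ((1 - C) * ((1 / σ) * ‖y‖ ^ 2 + (1 / τ) * ‖x‖ ^ 2)
          ≤ (1 / τ) * ‖x‖ ^ 2 - 2 * (inner ℝ y (A x) : ℝ) + (1 / σ) * ‖y‖ ^ 2) ∧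
      ((1 / τ) * ‖x‖ ^ 2 - 2 * (inner ℝ y (A x) : ℝ) + (1 / σ) * ‖y‖ ^ 2
          ≤ (1 + C) * ((1 / σ) * ‖y‖ ^ 2 + (1 / τ) * ‖x‖ ^ 2)) ∧
      ((x, y) ≠ 0 →
        0 < (1 / τ) * ‖x‖ ^ 2 - 2 * (inner ℝ y (A x) : ℝ) + (1 / σ) * ‖y‖ ^ 2) := by
  intro C x y
  have hnorm : ‖(ContinuousLinearMap.adjoint A).comp A‖ = ‖A‖ * ‖A‖ :=
    ContinuousLinearMap.norm_adjoint_comp_self A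
  have hCnn : 0 ≤ C := Real.sqrt_nonneg _
  have hC2 : C ^ 2 = τ * σ * (‖A‖ * ‖A‖) := by
    rw [show C = Real.sqrt (τ * σ * ‖(ContinuousLinearMap.adjoint A).comp A‖) from rfl,
      hnorm, Real.sq_sqrt]
    positivity
  have hC1 : C < 1 := by
    nlinarith [Real.sq_sqrt (show (0:ℝ) ≤ τ * σ * ‖(ContinuousLinearMap.adjoint A).comp A‖ by
      positivity), hnorm, hCnn]
  -- key bound : 2|⟨y, Ax⟩| ≤ C * ((1/σ)‖y‖² + (1/τ)‖x‖²)
  have hCS : |(inner ℝ y (A x) : ℝ)| ≤ ‖A‖ * ‖x‖ * ‖y‖ := by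
    calc |(inner ℝ y (A x) : ℝ)| ≤ ‖y‖ * ‖A x‖ := abs_real_inner_le_norm y (A x)
    _ ≤ ‖y‖ * (‖A‖ * ‖x‖) := by
        have := A.le_opNorm x
        nlinarith [norm_nonneg y]
    _ = ‖A‖ * ‖x‖ * ‖y‖ := by ring
  have key : 2 * |(inner ℝ y (A x) : ℝ)| ≤ C * ((1 / σ) * ‖y‖ ^ 2 + (1 / τ) * ‖x‖ ^ 2) := by
    have hs : (0:ℝ) < Real.sqrt τ := Real.sqrt_pos.mpr hτ
    have ht : (0:ℝ) < Real.sqrt σ := Real.sqrt_pos.mpr hσ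
    have hs2 : Real.sqrt τ ^ 2 = τ := Real.sq_sqrt hτ.le
    have ht2 : Real.sqrt σ ^ 2 = σ := Real.sq_sqrt hσ.le
    have hCe : C = Real.sqrt τ * Real.sqrt σ * ‖A‖ := by
      rw [show C = Real.sqrt (τ * σ * ‖(ContinuousLinearMap.adjoint A).comp A‖) from rfl,
        hnorm, Real.sqrt_mul (by positivity), Real.sqrt_mul hτ.le,
        Real.sqrt_mul_self (norm_nonneg A)]
    have h2 : 2 * (‖A‖ * ‖x‖ * ‖y‖) ≤ C * ((1 / σ) * ‖y‖ ^ 2 + (1 / τ) * ‖x‖ ^ 2) := by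
      rw [hCe]
      have hsq := sq_nonneg (Real.sqrt τ * ‖y‖ - Real.sqrt σ * ‖x‖)
      have hkey : 0 ≤ Real.sqrt τ * Real.sqrt σ * ‖A‖ *
          (Real.sqrt τ * ‖y‖ - Real.sqrt σ * ‖x‖) ^ 2 := by positivity
      rw [div_mul_eq_mul_div, div_mul_eq_mul_div, div_add_div _ _ (ne_of_gt hσ) (ne_of_gt hτ),
        ← mul_div_assoc, le_div_iff₀ (by positivity)]
      set a := Real.sqrt τ
      set b := Real.sqrt σ
      rw [← hs2, ← ht2]
      nlinarith [hkey]
    nlinarith [hCS]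
  constructor
  · nlinarith [key, abs_nonneg (inner ℝ y (A x) : ℝ), le_abs_self (inner ℝ y (A x) : ℝ),
      neg_abs_le (inner ℝ y (A x) : ℝ)]
  constructor
  · nlinarith [key, neg_abs_le (inner ℝ y (A x) : ℝ)]
  · intro hne
    have h : ¬(x = 0 ∧ y = 0) := by
      intro h; exact hne (by simp [Prod.ext_iff, h.1, h.2])
    have hpos : 0 < (1 / σ) * ‖y‖ ^ 2 + (1 / τ) * ‖x‖ ^ 2 := by
      by_cases hx : x = 0
      · have hy : y ≠ 0 := fun hy => h ⟨hx, hy⟩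
        have h1 : 0 < ‖y‖ := norm_pos_iff.mpr hy
        have h2 : 0 ≤ ‖x‖ ^ 2 := sq_nonneg _
        have h3 : 0 < (1 / σ) * ‖y‖ ^ 2 := by positivity
        nlinarith [mul_nonneg (by positivity : (0:ℝ) ≤ 1 / τ) h2]
      · have h1 : 0 < ‖x‖ := norm_pos_iff.mpr hx
        have h2 : 0 ≤ ‖y‖ ^ 2 := sq_nonneg _
        have h3 : 0 < (1 / τ) * ‖x‖ ^ 2 := by positivity
        nlinarith [mul_nonneg (by positivity : (0:ℝ) ≤ 1 / σ) h2]
    nlinarith [key, le_abs_self (inner ℝ y (A x) : ℝ), hC1, hpos]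
end

section
/- Let A be a real M×N matrix, τ, σ > 0, and set C = √(τσ‖AᵀA‖_op). If C < 1, then for all x ∈ ℝᴺ and y ∈ ℝᴹ, (2 − 2C)·yᵀAx ≤ C·((1/τ)‖x‖² + (1/σ)‖y‖² − 2 yᵀAx). In particular, writing ‖u‖²_M = (1/τ)‖x‖² − 2yᵀAx + (1/σ)‖y‖², we have 2 yᵀAx ≤ (C/(1−C))·‖u‖²_M. -/
/-- With `C = √(τσ‖AᵀA‖_op) < 1`, one has
`(2 − 2C)·yᵀAx ≤ C·((1/τ)‖x‖² + (1/σ)‖y‖² − 2yᵀAx)` and consequently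
`2 yᵀAx ≤ (C/(1−C))·‖u‖²_M` where `‖u‖²_M = (1/τ)‖x‖² − 2yᵀAx + (1/σ)‖y‖²`. -/
theorem stmt_2 {N M : ℕ}
    (A : EuclideanSpace ℝ (Fin N) →L[ℝ] EuclideanSpace ℝ (Fin M))
    (τ σ : ℝ) (hτ : 0 < τ) (hσ : 0 < σ)
    (C : ℝ) (hC : C = Real.sqrt (τ * σ * ‖(ContinuousLinearMap.adjoint A).comp A‖))
    (hC1 : C < 1) :
    ∀ (x : EuclideanSpace ℝ (Fin N)) (y : EuclideanSpace ℝ (Fin M)),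
      ((2 - 2 * C) * (inner ℝ y (A x) : ℝ)
          ≤ C * ((1 / τ) * ‖x‖ ^ 2 + (1 / σ) * ‖y‖ ^ 2 - 2 * (inner ℝ y (A x) : ℝ))) ∧
      (2 * (inner ℝ y (A x) : ℝ)
          ≤ (C / (1 - C))
              * ((1 / τ) * ‖x‖ ^ 2 - 2 * (inner ℝ y (A x) : ℝ) + (1 / σ) * ‖y‖ ^ 2)) := by
  intro x y
  set p : ℝ := (inner ℝ y (A x) : ℝ) with hp
  have hAA : ‖(ContinuousLinearMap.adjoint A).comp A‖ = ‖A‖ * ‖A‖ :=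
    ContinuousLinearMap.norm_adjoint_comp_self A
  set s := Real.sqrt τ with hs
  set t := Real.sqrt σ with ht
  have hs2 : s ^ 2 = τ := Real.sq_sqrt hτ.le
  have ht2 : t ^ 2 = σ := Real.sq_sqrt hσ.le
  have hs0 : 0 < s := Real.sqrt_pos.mpr hτ
  have ht0 : 0 < t := Real.sqrt_pos.mpr hσ
  have hCst : C = s * t * ‖A‖ := by
    rw [hC, hAA, show τ * σ * (‖A‖ * ‖A‖) = (s * t * ‖A‖) ^ 2 by
      rw [mul_pow, mul_pow, hs2, ht2]; ring]
    exact Real.sqrt_sq (by positivity)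
  have hpb : p ≤ ‖A‖ * ‖x‖ * ‖y‖ := by
    calc p ≤ ‖y‖ * ‖A x‖ := real_inner_le_norm y (A x)
    _ ≤ ‖y‖ * (‖A‖ * ‖x‖) := by
        have := A.le_opNorm x
        nlinarith [norm_nonneg y]
    _ = ‖A‖ * ‖x‖ * ‖y‖ := by ring
  have key : 2 * p ≤ C * ((1 / τ) * ‖x‖ ^ 2 + (1 / σ) * ‖y‖ ^ 2) := by
    have hsne : s ≠ 0 := hs0.ne'
    have htne : t ≠ 0 := ht0.ne'
    have expand : C * ((1 / τ) * ‖x‖ ^ 2 + (1 / σ) * ‖y‖ ^ 2)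
        = ‖A‖ * ((t * ‖x‖ - s * ‖y‖) ^ 2 + 2 * (s * t) * (‖x‖ * ‖y‖)) / (s * t) := by
      rw [hCst, ← hs2, ← ht2]
      field_simp
      ring
    rw [expand, le_div_iff₀ (by positivity)]
    nlinarith [hpb, norm_nonneg A, sq_nonneg (t * ‖x‖ - s * ‖y‖), mul_pos hs0 ht0,
      norm_nonneg x, norm_nonneg y]
  constructor
  · nlinarith [key]
  · rw [div_mul_eq_mul_div, le_div_iff₀ (by linarith : (0:ℝ) < 1 - C)]
    nlinarith [key]
end

section
/- Let R : ℝⁿ → ℝⁿ be a monotone operator, M a symmetric n×n real matrix, and suppose points u⋆, u_k, u_{k+1} ∈ ℝⁿ satisfy M(u_{k+1} − u_k) = R(u⋆) − R(u_{k+1}) with R(u⋆) = 0 (more generally, (u⋆ − u_{k+1})ᵀ(R(u⋆) − R(u_{k+1})) ≥ 0 and M(u_{k+1} − u_k) = −R(u_{k+1})). Then ‖u_k − u⋆‖²_M ≥ ‖u_{k+1} − u_k‖²_M + ‖u_{k+1} − u⋆‖²_M, where ‖v‖²_M = vᵀMv. -/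
/-- Fejér-type inequality. If `R` is monotone, `M` symmetric,
`R u⋆ = 0`, and `M(u_{k+1} − u_k) = R u⋆ − R u_{k+1}`, then
`‖u_k − u⋆‖²_M ≥ ‖u_{k+1} − u_k‖²_M + ‖u_{k+1} − u⋆‖²_M`. -/
theorem stmt_3 {n : ℕ}
    (R : EuclideanSpace ℝ (Fin n) → EuclideanSpace ℝ (Fin n))
    (hmono : ∀ u v : EuclideanSpace ℝ (Fin n), 0 ≤ (inner ℝ (u - v) (R u - R v) : ℝ))
    (M : EuclideanSpace ℝ (Fin n) →ₗ[ℝ] EuclideanSpace ℝ (Fin n))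
    (hsymm : ∀ u v : EuclideanSpace ℝ (Fin n), (inner ℝ (M u) v : ℝ) = inner ℝ u (M v))
    (ustar uk uk1 : EuclideanSpace ℝ (Fin n))
    (hopt : R ustar = 0)
    (hstep : M (uk1 - uk) = R ustar - R uk1) :
    (inner ℝ (uk - ustar) (M (uk - ustar)) : ℝ)
      ≥ (inner ℝ (uk1 - uk) (M (uk1 - uk)) : ℝ)
        + (inner ℝ (uk1 - ustar) (M (uk1 - ustar)) : ℝ) := by
  have key : (0:ℝ) ≤ inner ℝ (uk1 - ustar) (R uk1 - R ustar) := hmono uk1 ustar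
  have h2 : (inner ℝ (uk1 - ustar) (M (uk1 - uk)) : ℝ) = inner ℝ (uk1 - ustar) (R ustar - R uk1) := by
    rw [hstep]
  have hR : (inner ℝ (uk1 - ustar) (M (uk1 - uk)) : ℝ) ≤ 0 := by
    rw [h2, show R ustar - R uk1 = -(R uk1 - R ustar) by abel, inner_neg_right]
    linarith
  have expand : (inner ℝ (uk - ustar) (M (uk - ustar)) : ℝ)
      = inner ℝ (uk1 - uk) (M (uk1 - uk)) + inner ℝ (uk1 - ustar) (M (uk1 - ustar))
        - 2 * inner ℝ (uk1 - ustar) (M (uk1 - uk)) := by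
    have e1 : uk - ustar = (uk1 - ustar) - (uk1 - uk) := by abel
    rw [e1]
    simp only [map_sub, inner_sub_left, inner_sub_right]
    have hs : ∀ a b : EuclideanSpace ℝ (Fin n), (inner ℝ a (M b) : ℝ) = inner ℝ b (M a) := by
      intro a b; rw [← hsymm, real_inner_comm]
    linarith [hs uk uk1, hs ustar uk1, hs ustar uk]
  rw [expand]
  linarith
end
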